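/- arXiv:1902.06951 — 2 statements merged into one kernel-verified Lean document; each statement's English description precedes it below -/
import Mathlib

section
/- Let a22, a32, a23, a33, b22, b32, b23, b33, λ, μ, γ be complex numbers with λ ≠ 0, μ ≠ 0, γ ≠ 0, and b32 ≠ 0. Suppose: (i) a22·b22 + a32·b32 = 1; (ii) a23·b23 + a33·b33 = 1; (iii) a22·b23 + a32·b33 = 0; (iv) a23·b22 + a33·b32 = 0; and (v) λμ·a22·b22 + μγ·a32·b32 = λμ; (vi) λμ·a23·b23 + μγ·a33·b33 = μγ; (vii) λμ·a22·b23 + μγ·a32·b33 = 0; (viii) λμ·a23·b22 + μγ·a33·b32 = 0. Then γ = λ. -/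
theorem stmt16 (a22 a32 a23 a33 b22 b32 b23 b33 lam mu gam : ℂ)
    (hlam : lam ≠ 0) (hmu : mu ≠ 0) (hgam : gam ≠ 0) (hb32 : b32 ≠ 0)
    (h1 : a22 * b22 + a32 * b32 = 1)
    (h2 : a23 * b23 + a33 * b33 = 1)
    (h3 : a22 * b23 + a32 * b33 = 0)
    (h4 : a23 * b22 + a33 * b32 = 0)
    (h5 : lam * mu * (a22 * b22) + mu * gam * (a32 * b32) = lam * mu)
    (h6 : lam * mu * (a23 * b23) + mu * gam * (a33 * b33) = mu * gam)
    (h7 : lam * mu * (a22 * b23) + mu * gam * (a32 * b33) = 0)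
    (h8 : lam * mu * (a23 * b22) + mu * gam * (a33 * b32) = 0) :
    gam = lam := by
  by_contra hne
  have hd : gam - lam ≠ 0 := sub_ne_zero.mpr hne
  have e1 : mu * (gam - lam) * (a32 * b32) = 0 := by
    linear_combination h5 - lam * mu * h1
  have e2 : mu * (gam - lam) * (a33 * b32) = 0 := by
    linear_combination h8 - lam * mu * h4
  have hmd : mu * (gam - lam) ≠ 0 := mul_ne_zero hmu hd
  have ha32 : a32 = 0 := by
    rcases mul_eq_zero.mp ((mul_eq_zero.mp e1).resolve_left hmd) with h | h
    · exact h
    · exact absurd h hb32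
  have ha33 : a33 = 0 := by
    rcases mul_eq_zero.mp ((mul_eq_zero.mp e2).resolve_left hmd) with h | h
    · exact h
    · exact absurd h hb32
  have hb22 : a22 * b22 = 1 := by rw [ha32] at h1; simpa using h1
  have hb22' : b22 ≠ 0 := by
    intro h; rw [h, mul_zero] at hb22; exact one_ne_zero hb22.symm
  have ha23 : a23 = 0 := by
    rw [ha33, zero_mul, add_zero] at h4
    exact (mul_eq_zero.mp h4).resolve_right hb22'
  rw [ha23, ha33, zero_mul, zero_mul, add_zero] at h2
  exact one_ne_zero h2.symm
end

section
/- Let B12, B13, B32, B33, b12, b13, b32, b33, λ, γ be complex numbers with λ ≠ 0 and b33 ≠ 0. Suppose: (i) B12·b12 + B32·b32 = 1; (ii) B13·b13 + B33·b33 = 1; (iii) B12·b13 + B32·b33 = 0; (iv) B13·b12 + B33·b32 = 0; and (v) B12·b12 + γλ·B32·b32 = λ²; (vi) B13·b13 + γλ·B33·b33 = λ²; (vii) B12·b13 + γλ·B32·b33 = 0; (viii) B13·b12 + γλ·B33·b32 = 0. Then γ·λ = 1. -/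
theorem stmt17 (B12 B13 B32 B33 b12 b13 b32 b33 lam gam : ℂ)
    (hlam : lam ≠ 0) (hb33 : b33 ≠ 0)
    (h1 : B12 * b12 + B32 * b32 = 1)
    (h2 : B13 * b13 + B33 * b33 = 1)
    (h3 : B12 * b13 + B32 * b33 = 0)
    (h4 : B13 * b12 + B33 * b32 = 0)
    (h5 : B12 * b12 + gam * lam * (B32 * b32) = lam ^ 2)
    (h6 : B13 * b13 + gam * lam * (B33 * b33) = lam ^ 2)
    (h7 : B12 * b13 + gam * lam * (B32 * b33) = 0)
    (h8 : B13 * b12 + gam * lam * (B33 * b32) = 0) :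
    gam * lam = 1 := by
  by_contra hg
  have hgne : gam * lam - 1 ≠ 0 := sub_ne_zero.mpr hg
  -- from h3, h7: (γλ - 1) B32 b33 = 0
  have hB32 : B32 = 0 := by
    have : (gam * lam - 1) * (B32 * b33) = 0 := by linear_combination h7 - h3
    rcases mul_eq_zero.mp this with h | h
    · exact absurd h hgne
    · rcases mul_eq_zero.mp h with h | h
      · exact h
      · exact absurd h hb33
  subst hB32
  have hB33 : B33 = 0 := by
    have hlam2 : lam ^ 2 = 1 := by linear_combination h1 - h5
    have : (gam * lam - 1) * (B33 * b33) = 0 := by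
      linear_combination h6 - h2 + hlam2
    rcases mul_eq_zero.mp this with h | h
    · exact absurd h hgne
    · rcases mul_eq_zero.mp h with h | h
      · exact h
      · exact absurd h hb33
  subst hB33
  have hB13 : B13 * b13 = 1 := by linear_combination h2
  have hb12 : b12 = 0 := by
    have h4' : B13 * b12 = 0 := by linear_combination h4
    rcases mul_eq_zero.mp h4' with h | h
    · exfalso; apply one_ne_zero (α := ℂ); rw [← hB13, h, zero_mul]
    · exact h
  subst hb12
  have : (0 : ℂ) = 1 := by linear_combination h1
  exact one_ne_zero this.symm
end
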